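/- For real L ≥ 1, d ≥ 2, and 0 ≤ x ≤ L-1, the difference of digamma values satisfies ψ(L+d+x) - ψ(L-x) ≥ (2x+d)/(L + d/2). -/

import Mathlib

/-- The digamma function, the logarithmic derivative of the Gamma function. -/
noncomputable def digamma (x : ℝ) : ℝ := deriv (fun y => Real.log (Real.Gamma y)) x

open Real Set Filter Topology

private lemma logGamma_diffAt {x : ℝ} (hx : 0 < x) :
    DifferentiableAt ℝ (fun y => Real.log (Real.Gamma y)) x :=
  (Real.differentiableAt_Gamma fun m =>
    (ne_of_gt ((neg_nonpos.2 (Nat.cast_nonneg m)).trans_lt hx))).log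
    (Real.Gamma_pos_of_pos hx).ne'

private lemma digamma_rec {x : ℝ} (hx : 0 < x) : digamma (x + 1) = digamma x + 1 / x := by
  unfold digamma
  rw [← deriv_comp_add_const, one_div, ← Real.deriv_log,
    ← deriv_add (logGamma_diffAt hx) (Real.differentiableAt_log hx.ne')]
  apply Filter.EventuallyEq.deriv_eq
  filter_upwards [eventually_gt_nhds hx] with y hy
  simp only [Pi.add_apply, Real.Gamma_add_one hy.ne',
    Real.log_mul hy.ne' (Real.Gamma_pos_of_pos hy).ne', add_comm]

private lemma digamma_mono {u v : ℝ} (hu : 0 < u) (huv : u ≤ v) : digamma u ≤ digamma v := by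
  have hc : ConvexOn ℝ (Ioi 0) (Real.log ∘ Real.Gamma) := Real.convexOn_log_Gamma
  have := hc.monotoneOn_deriv (fun z hz => logGamma_diffAt (mem_Ioi.1 hz))
    (mem_Ioi.2 hu) (mem_Ioi.2 (hu.trans_le huv)) huv
  simpa only [Function.comp_def, digamma] using this

private lemma digamma_add_nat {x : ℝ} (hx : 0 < x) (N : ℕ) :
    digamma (x + N) = digamma x + ∑ k ∈ Finset.range N, 1 / (x + k) := by
  induction N with
  | zero => simp
  | succ n ih =>
    have h : x + ((n : ℝ) + 1) = (x + n) + 1 := by ring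
    have hxn : (0 : ℝ) < x + n := by positivity
    rw [Nat.cast_succ, h, digamma_rec hxn, ih, Finset.sum_range_succ]
    ring

/-- For `L ≥ 1`, `d ≥ 2` and `0 ≤ x ≤ L - 1`,
`ψ(L+d+x) - ψ(L-x) ≥ (2x+d)/(L+d/2)`. -/
theorem digamma_diff_lower_bound (L d x : ℝ) (hL : 1 ≤ L) (hd : 2 ≤ d)
    (hx0 : 0 ≤ x) (hx1 : x ≤ L - 1) :
    (2 * x + d) / (L + d / 2) ≤ digamma (L + d + x) - digamma (L - x) := by
  set a : ℝ := L - x with ha_def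
  set b : ℝ := L + d + x with hb_def
  set m : ℝ := L + d / 2 with hm_def
  set s : ℝ := 2 * x + d with hs_def
  have ha0 : (0 : ℝ) < a := by simp only [ha_def]; linarith
  have hb0 : (0 : ℝ) < b := by simp only [hb_def]; linarith
  have hm0 : (0 : ℝ) < m := by simp only [hm_def]; linarith
  have hs0 : (0 : ℝ) ≤ s := by simp only [hs_def]; linarith
  have hab : a ≤ b := by simp only [ha_def, hb_def]; linarith
  have hsab : s = b - a := by simp only [hs_def, ha_def, hb_def]; ring
  have hmab : m = (a + b) / 2 := by simp only [hm_def, ha_def, hb_def]; ring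
  -- key finite bound
  have key : ∀ N : ℕ, s / m - s / (m + N) ≤ digamma b - digamma a := by
    intro N
    have h1 := digamma_add_nat ha0 N
    have h2 := digamma_add_nat hb0 N
    have h3 : digamma (a + N) ≤ digamma (b + N) :=
      digamma_mono (by positivity) (by linarith)
    have hterm : ∀ k ∈ Finset.range N,
        s / (m + k) - s / (m + (k + 1)) ≤ 1 / (a + k) - 1 / (b + k) := by
      intro k _
      have hk0 : (0 : ℝ) ≤ (k : ℝ) := Nat.cast_nonneg k
      have hak : (0 : ℝ) < a + k := by positivity
      have hbk : (0 : ℝ) < b + k := by positivity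
      have hmk : (0 : ℝ) < m + k := by positivity
      have hmk1 : (0 : ℝ) < m + (k + 1) := by positivity
      have e1 : 1 / (a + k) - 1 / (b + k) = s / ((a + k) * (b + k)) := by
        rw [hsab]; field_simp; ring
      have e2 : s / (m + k) - s / (m + (k + 1)) = s / ((m + k) * (m + (k + 1))) := by
        field_simp
        ring
      rw [e1, e2]
      apply div_le_div_of_nonneg_left hs0 (by positivity)
      rw [hmab]
      nlinarith [sq_nonneg (b - a)]
    have hsum := Finset.sum_le_sum hterm
    have htel : ∑ k ∈ Finset.range N, (s / (m + k) - s / (m + (k + 1)))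
        = s / m - s / (m + N) := by
      have := Finset.sum_range_sub' (fun i : ℕ => s / (m + i)) N
      simpa [Nat.cast_succ, add_assoc] using this
    have hsplit : ∑ k ∈ Finset.range N, (1 / (a + k) - 1 / (b + k))
        = (∑ k ∈ Finset.range N, 1 / (a + k)) - ∑ k ∈ Finset.range N, 1 / (b + k) :=
      Finset.sum_sub_distrib _ _
    rw [htel] at hsum
    rw [hsplit] at hsum
    linarith [h3, h1, h2, hsum]
  -- take the limit N → ∞
  have hlim : Tendsto (fun N : ℕ => s / m - s / (m + N)) atTop (𝓝 (s / m - 0)) := by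
    apply Tendsto.sub tendsto_const_nhds
    apply Tendsto.div_atTop tendsto_const_nhds
    exact tendsto_atTop_add_const_left _ _ tendsto_natCast_atTop_atTop
  have := le_of_tendsto' hlim key
  simpa using this
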